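/- arXiv:2104.13731 — 5 statements merged into one kernel-verified Lean document; each statement's English description precedes it below -/
import Mathlib

section
/- There do not exist a point ξ¹ ∈ [-1,1] and a real weight λ₁ such that for every f in the linear span of f1 and f2, the integral of f² over [-1,1] equals λ₁·f(ξ¹)². -/
open MeasureTheory Set

noncomputable def f1 : ℝ → ℝ := fun x => if x < 0 then 0 else 1

noncomputable def f2 (a A B : ℝ) : ℝ → ℝ := fun x =>
  if x < 0 then a
  else if x < 1/4 then A
  else if x < 1/2 then -A
  else if x < 3/4 then B
  else -B

lemma piece_int (g : ℝ → ℝ) (u v c : ℝ) (huv : u ≤ v)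
    (h : ∀ x ∈ Ioo u v, g x = c) :
    IntervalIntegrable g volume u v ∧ (∫ x in u..v, g x) = (v - u) * c := by
  have hae : g =ᵐ[volume.restrict (Ioo u v)] fun _ => c := by
    filter_upwards [ae_restrict_mem measurableSet_Ioo] with x hx using h x hx
  have hint : IntegrableOn g (Ioc u v) volume := by
    have : IntegrableOn g (Ioo u v) volume :=
      (integrableOn_const (by simp [Real.volume_Ioo])).congr_fun_ae hae.symm
    exact this.congr_set_ae Ioo_ae_eq_Ioc.symm
  constructor
  · exact (intervalIntegrable_iff_integrableOn_Ioc_of_le huv).2 hint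
  · rw [intervalIntegral.integral_of_le huv, MeasureTheory.integral_Ioc_eq_integral_Ioo]
    rw [setIntegral_congr_fun measurableSet_Ioo (fun x hx => h x hx)]
    simp [Real.volume_Ioo, mul_comm]
    left; exact huv

theorem no_one_point_discretization (a A B : ℝ) (ha : 0 < a) (hAB : B < A) (hB : 0 < B)
    (hcond : A ^ 2 > 2 * a ^ 2 + B ^ 2) :
    ¬ ∃ (ξ : ℝ) (l : ℝ), ξ ∈ Icc (-1:ℝ) 1 ∧
      ∀ f ∈ Submodule.span ℝ ({f1, f2 a A B} : Set (ℝ → ℝ)),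
        (∫ x in (-1:ℝ)..1, (f x) ^ 2) = l * (f ξ) ^ 2 := by
  rintro ⟨ξ, l, hξ, hall⟩
  -- f1 integral
  have p1 := piece_int (fun x => f1 x ^ 2) (-1) 0 0 (by norm_num)
    (fun x hx => by simp [f1, hx.2])
  have p2 := piece_int (fun x => f1 x ^ 2) 0 1 1 (by norm_num)
    (fun x hx => by simp [f1, not_lt.2 hx.1.le])
  have hI1 : (∫ x in (-1:ℝ)..1, (f1 x) ^ 2) = 1 := by
    rw [← intervalIntegral.integral_add_adjacent_intervals p1.1 p2.1, p1.2, p2.2]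
    norm_num
  -- f2 integral
  set g := f2 a A B with hg
  have q1 := piece_int (fun x => g x ^ 2) (-1) 0 (a ^ 2) (by norm_num)
    (fun x hx => by simp [hg, f2, hx.2])
  have q2 := piece_int (fun x => g x ^ 2) 0 (1/4) (A ^ 2) (by norm_num)
    (fun x hx => by
      show f2 a A B x ^ 2 = _
      simp only [f2]
      rw [if_neg (not_lt.2 hx.1.le), if_pos hx.2])
  have q3 := piece_int (fun x => g x ^ 2) (1/4) (1/2) (A ^ 2) (by norm_num)
    (fun x hx => by
      have h1 : ¬ x < 0 := by push_neg; linarith [hx.1]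
      have h2 : ¬ x < 1/4 := not_lt.2 hx.1.le
      show f2 a A B x ^ 2 = _
      simp only [f2]
      rw [if_neg h1, if_neg h2, if_pos hx.2]
      ring)
  have q4 := piece_int (fun x => g x ^ 2) (1/2) (3/4) (B ^ 2) (by norm_num)
    (fun x hx => by
      have h1 : ¬ x < 0 := by push_neg; linarith [hx.1]
      have h2 : ¬ x < 1/4 := by push_neg; linarith [hx.1]
      have h3 : ¬ x < 1/2 := not_lt.2 hx.1.le
      show f2 a A B x ^ 2 = _
      simp only [f2]
      rw [if_neg h1, if_neg h2, if_neg h3, if_pos hx.2])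
  have q5 := piece_int (fun x => g x ^ 2) (3/4) 1 (B ^ 2) (by norm_num)
    (fun x hx => by
      have h1 : ¬ x < 0 := by push_neg; linarith [hx.1]
      have h2 : ¬ x < 1/4 := by push_neg; linarith [hx.1]
      have h3 : ¬ x < 1/2 := by push_neg; linarith [hx.1]
      have h4 : ¬ x < 3/4 := not_lt.2 hx.1.le
      show f2 a A B x ^ 2 = _
      simp only [f2]
      rw [if_neg h1, if_neg h2, if_neg h3, if_neg h4]
      ring)
  have hI2 : (∫ x in (-1:ℝ)..1, (g x) ^ 2) = a ^ 2 + A ^ 2 / 2 + B ^ 2 / 2 := by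
    rw [← intervalIntegral.integral_add_adjacent_intervals
        (q1.1.trans (q2.1.trans (q3.1.trans (q4.1.trans q5.1))))
        (by norm_num : IntervalIntegrable (fun x => g x ^ 2) volume 1 1)]
    rw [← intervalIntegral.integral_add_adjacent_intervals q1.1
        (q2.1.trans (q3.1.trans (q4.1.trans q5.1)))]
    rw [← intervalIntegral.integral_add_adjacent_intervals q2.1
        (q3.1.trans (q4.1.trans q5.1))]
    rw [← intervalIntegral.integral_add_adjacent_intervals q3.1 (q4.1.trans q5.1)]
    rw [← intervalIntegral.integral_add_adjacent_intervals q4.1 q5.1]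
    rw [q1.2, q2.2, q3.2, q4.2, q5.2]
    simp
    ring
  -- membership
  have hf1 : f1 ∈ Submodule.span ℝ ({f1, f2 a A B} : Set (ℝ → ℝ)) :=
    Submodule.subset_span (mem_insert _ _)
  have hf2 : f2 a A B ∈ Submodule.span ℝ ({f1, f2 a A B} : Set (ℝ → ℝ)) :=
    Submodule.subset_span (mem_insert_of_mem _ rfl)
  have e1 := hall f1 hf1
  have e2 := hall (f2 a A B) hf2
  rw [hI1] at e1
  rw [← hg, hI2] at e2
  -- ξ ≥ 0
  by_cases hξ0 : ξ < 0
  · rw [show f1 ξ = 0 by simp [f1, hξ0]] at e1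
    norm_num at e1
  · rw [show f1 ξ = 1 by simp [f1, hξ0]] at e1
    norm_num at e1
    subst e1
    have hgξ : (g ξ) ^ 2 = A ^ 2 ∨ (g ξ) ^ 2 = B ^ 2 := by
      show f2 a A B ξ ^ 2 = A ^ 2 ∨ f2 a A B ξ ^ 2 = B ^ 2
      simp only [f2]
      rw [if_neg hξ0]
      by_cases h2 : ξ < 1/4
      · rw [if_pos h2]; left; rfl
      rw [if_neg h2]
      by_cases h3 : ξ < 1/2
      · rw [if_pos h3]; left; ring
      rw [if_neg h3]
      by_cases h4 : ξ < 3/4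
      · rw [if_pos h4]; right; rfl
      · rw [if_neg h4]; right; ring
    rw [hg] at e2
    rcases hgξ with h | h <;> rw [h] at e2 <;> nlinarith
end

section
/- There do not exist points ξ¹, ξ² ∈ [-1,1] and real weights λ₁, λ₂ such that for every f in the linear span of f1 and f2, the integral of f² over [-1,1] equals λ₁·f(ξ¹)² + λ₂·f(ξ²)². -/
open MeasureTheory Set

lemma step_ae {g : ℝ → ℝ} {c d k : ℝ} (hcd : c ≤ d) (h : ∀ x ∈ Ioo c d, g x = k) :
    ∀ᵐ x ∂(volume : Measure ℝ), x ∈ Set.uIoc c d → g x = k := by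
  have hd : ∀ᵐ x ∂(volume : Measure ℝ), x ≠ d := by
    refine MeasureTheory.ae_iff.mpr ?_
    simp
  filter_upwards [hd] with x hx hxI
  rw [Set.uIoc_of_le hcd] at hxI
  exact h x ⟨hxI.1, lt_of_le_of_ne hxI.2 hx⟩

lemma step_integral {g : ℝ → ℝ} {c d k : ℝ} (hcd : c ≤ d) (h : ∀ x ∈ Ioo c d, g x = k) :
    ∫ x in c..d, g x = k * (d - c) := by
  rw [intervalIntegral.integral_congr_ae (step_ae hcd h), intervalIntegral.integral_const,
    smul_eq_mul, mul_comm]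

lemma step_integrable {g : ℝ → ℝ} {c d k : ℝ} (hcd : c ≤ d) (h : ∀ x ∈ Ioo c d, g x = k) :
    IntervalIntegrable g volume c d := by
  rw [intervalIntegrable_iff]
  have hk : IntegrableOn (fun _ : ℝ => k) (Set.uIoc c d) volume := by
    apply (integrableOn_const_iff (by simp)).mpr
    right
    rw [Set.uIoc_of_le hcd]
    exact measure_Ioc_lt_top
  exact hk.congr ((MeasureTheory.ae_restrict_iff' measurableSet_uIoc).mpr
    ((step_ae hcd h).mono fun x hx hxI => (hx hxI).symm))

lemma integral_five {g : ℝ → ℝ} {k0 k1 k2 k3 k4 : ℝ}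
    (h0 : ∀ x ∈ Ioo (-1:ℝ) 0, g x = k0) (h1 : ∀ x ∈ Ioo (0:ℝ) (1/4), g x = k1)
    (h2 : ∀ x ∈ Ioo (1/4:ℝ) (1/2), g x = k2) (h3 : ∀ x ∈ Ioo (1/2:ℝ) (3/4), g x = k3)
    (h4 : ∀ x ∈ Ioo (3/4:ℝ) 1, g x = k4) :
    ∫ x in (-1:ℝ)..1, g x = k0 + (k1 + k2 + k3 + k4) / 4 := by
  have i0 := step_integrable (by norm_num : (-1:ℝ) ≤ 0) h0
  have i1 := step_integrable (by norm_num : (0:ℝ) ≤ 1/4) h1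
  have i2 := step_integrable (by norm_num : (1/4:ℝ) ≤ 1/2) h2
  have i3 := step_integrable (by norm_num : (1/2:ℝ) ≤ 3/4) h3
  have i4 := step_integrable (by norm_num : (3/4:ℝ) ≤ 1) h4
  have e4 := intervalIntegral.integral_add_adjacent_intervals i3 i4
  have e3 := intervalIntegral.integral_add_adjacent_intervals i2 (i3.trans i4)
  have e2 := intervalIntegral.integral_add_adjacent_intervals i1 (i2.trans (i3.trans i4))
  have e1 := intervalIntegral.integral_add_adjacent_intervals i0
    (i1.trans (i2.trans (i3.trans i4)))
  rw [← e1, ← e2, ← e3, ← e4, step_integral (by norm_num) h0, step_integral (by norm_num) h1,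
    step_integral (by norm_num) h2, step_integral (by norm_num) h3,
    step_integral (by norm_num) h4]
  ring

lemma f2_eval0 {a A B x : ℝ} (h : x < 0) : f2 a A B x = a := by
  simp only [f2]; rw [if_pos h]
lemma f2_eval1 {a A B x : ℝ} (h : ¬ x < 0) (h' : x < 1/4) : f2 a A B x = A := by
  simp only [f2]; rw [if_neg h, if_pos h']
lemma f2_eval2 {a A B x : ℝ} (h : ¬ x < 0) (h' : ¬ x < 1/4) (h'' : x < 1/2) :
    f2 a A B x = -A := by
  simp only [f2]; rw [if_neg h, if_neg h', if_pos h'']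
lemma f2_eval3 {a A B x : ℝ} (h : ¬ x < 0) (h' : ¬ x < 1/4) (h'' : ¬ x < 1/2)
    (h''' : x < 3/4) : f2 a A B x = B := by
  simp only [f2]; rw [if_neg h, if_neg h', if_neg h'', if_pos h''']
lemma f2_eval4 {a A B x : ℝ} (h : ¬ x < 0) (h' : ¬ x < 1/4) (h'' : ¬ x < 1/2)
    (h''' : ¬ x < 3/4) : f2 a A B x = -B := by
  simp only [f2]; rw [if_neg h, if_neg h', if_neg h'', if_neg h''']
lemma f1_eval0 {x : ℝ} (h : x < 0) : f1 x = 0 := by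
  simp only [f1]; rw [if_pos h]
lemma f1_eval1 {x : ℝ} (h : ¬ x < 0) : f1 x = 1 := by
  simp only [f1]; rw [if_neg h]

lemma vals (a A B : ℝ) (ξ : ℝ) :
    (f1 ξ = 0 ∧ f2 a A B ξ = a) ∨
    (f1 ξ = 1 ∧ (f2 a A B ξ = A ∨ f2 a A B ξ = -A ∨ f2 a A B ξ = B ∨ f2 a A B ξ = -B)) := by
  by_cases h0 : ξ < 0
  · exact Or.inl ⟨f1_eval0 h0, f2_eval0 h0⟩
  refine Or.inr ⟨f1_eval1 h0, ?_⟩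
  by_cases h1 : ξ < 1/4
  · exact Or.inl (f2_eval1 h0 h1)
  by_cases h2 : ξ < 1/2
  · exact Or.inr (Or.inl (f2_eval2 h0 h1 h2))
  by_cases h3 : ξ < 3/4
  · exact Or.inr (Or.inr (Or.inl (f2_eval3 h0 h1 h2 h3)))
  · exact Or.inr (Or.inr (Or.inr (f2_eval4 h0 h1 h2 h3)))

lemma int_f1 : ∫ x in (-1:ℝ)..1, (f1 x) ^ 2 = 1 := by
  rw [integral_five (k0 := 0) (k1 := 1) (k2 := 1) (k3 := 1) (k4 := 1)]
  · norm_num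
  · exact fun x hx => by rw [f1_eval0 hx.2]; norm_num
  all_goals
    refine fun x hx => ?_
    rw [f1_eval1 (not_lt.mpr (by linarith [hx.1,
      (by norm_num : ((0:ℝ) ≤ 1/4) ∧ (0:ℝ) ≤ 1/2 ∧ (0:ℝ) ≤ 3/4)] : (0:ℝ) ≤ x))]
    norm_num

lemma int_f2 (a A B : ℝ) :
    ∫ x in (-1:ℝ)..1, (f2 a A B x) ^ 2 = a ^ 2 + (A ^ 2 + B ^ 2) / 2 := by
  rw [integral_five (k0 := a^2) (k1 := A^2) (k2 := A^2) (k3 := B^2) (k4 := B^2)]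
  · ring
  · exact fun x hx => by rw [f2_eval0 hx.2]
  · exact fun x hx => by rw [f2_eval1 (not_lt.mpr hx.1.le) hx.2]
  · exact fun x hx => by
      rw [f2_eval2 (not_lt.mpr (by linarith [hx.1] : (0:ℝ) ≤ x)) (not_lt.mpr hx.1.le) hx.2]
      ring
  · exact fun x hx => by
      rw [f2_eval3 (not_lt.mpr (by linarith [hx.1] : (0:ℝ) ≤ x))
        (not_lt.mpr (by linarith [hx.1] : (1/4:ℝ) ≤ x)) (not_lt.mpr hx.1.le) hx.2]
  · exact fun x hx => by
      rw [f2_eval4 (not_lt.mpr (by linarith [hx.1] : (0:ℝ) ≤ x))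
        (not_lt.mpr (by linarith [hx.1] : (1/4:ℝ) ≤ x))
        (not_lt.mpr (by linarith [hx.1] : (1/2:ℝ) ≤ x)) (not_lt.mpr hx.1.le)]
      ring

lemma int_f12 (a A B : ℝ) :
    ∫ x in (-1:ℝ)..1, ((f1 + f2 a A B) x) ^ 2
      = 1 + (a ^ 2 + (A ^ 2 + B ^ 2) / 2) := by
  rw [integral_five (k0 := a^2) (k1 := (1+A)^2) (k2 := (1-A)^2) (k3 := (1+B)^2)
    (k4 := (1-B)^2)]
  · ring
  · exact fun x hx => by
      rw [Pi.add_apply, f1_eval0 hx.2, f2_eval0 hx.2]; ring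
  · exact fun x hx => by
      rw [Pi.add_apply, f1_eval1 (not_lt.mpr hx.1.le), f2_eval1 (not_lt.mpr hx.1.le) hx.2]
  · exact fun x hx => by
      have h0 : ¬ x < 0 := not_lt.mpr (by linarith [hx.1])
      rw [Pi.add_apply, f1_eval1 h0, f2_eval2 h0 (not_lt.mpr hx.1.le) hx.2]; ring
  · exact fun x hx => by
      have h0 : ¬ x < 0 := not_lt.mpr (by linarith [hx.1])
      have h1 : ¬ x < 1/4 := not_lt.mpr (by linarith [hx.1])
      rw [Pi.add_apply, f1_eval1 h0, f2_eval3 h0 h1 (not_lt.mpr hx.1.le) hx.2]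
  · exact fun x hx => by
      have h0 : ¬ x < 0 := not_lt.mpr (by linarith [hx.1])
      have h1 : ¬ x < 1/4 := not_lt.mpr (by linarith [hx.1])
      have h2 : ¬ x < 1/2 := not_lt.mpr (by linarith [hx.1])
      rw [Pi.add_apply, f1_eval1 h0, f2_eval4 h0 h1 h2 (not_lt.mpr hx.1.le)]; ring

theorem no_two_point_discretization (a A B : ℝ) (ha : 0 < a) (hAB : B < A) (hB : 0 < B)
    (hcond : A ^ 2 > 2 * a ^ 2 + B ^ 2) :
    ¬ ∃ (ξ₁ ξ₂ : ℝ) (l₁ l₂ : ℝ), ξ₁ ∈ Icc (-1:ℝ) 1 ∧ ξ₂ ∈ Icc (-1:ℝ) 1 ∧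
      ∀ f ∈ Submodule.span ℝ ({f1, f2 a A B} : Set (ℝ → ℝ)),
        (∫ x in (-1:ℝ)..1, (f x) ^ 2) = l₁ * (f ξ₁) ^ 2 + l₂ * (f ξ₂) ^ 2 := by
  rintro ⟨ξ₁, ξ₂, l₁, l₂, -, -, hquad⟩
  have m1 : f1 ∈ Submodule.span ℝ ({f1, f2 a A B} : Set (ℝ → ℝ)) :=
    Submodule.subset_span (Set.mem_insert _ _)
  have m2 : f2 a A B ∈ Submodule.span ℝ ({f1, f2 a A B} : Set (ℝ → ℝ)) :=
    Submodule.subset_span (Set.mem_insert_of_mem _ rfl)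
  have m3 : f1 + f2 a A B ∈ Submodule.span ℝ ({f1, f2 a A B} : Set (ℝ → ℝ)) :=
    Submodule.add_mem _ m1 m2
  have E1 := hquad f1 m1
  have E2 := hquad (f2 a A B) m2
  have E3 := hquad (f1 + f2 a A B) m3
  rw [int_f1] at E1
  rw [int_f2] at E2
  rw [int_f12] at E3
  simp only [Pi.add_apply] at E3
  have hA : 0 < A := hB.trans hAB
  rcases vals a A B ξ₁ with ⟨hp1, hq1⟩ | ⟨hp1, hq1⟩ <;>
    rcases vals a A B ξ₂ with ⟨hp2, hq2⟩ | ⟨hp2, hq2⟩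
  · -- both in negative part
    rw [hp1, hp2] at E1
    norm_num at E1
  · -- ξ₁ negative, ξ₂ positive
    rw [hp1, hp2] at E1 E3
    rw [hq1] at E2 E3
    have hq0 : f2 a A B ξ₂ = 0 := by
      linear_combination (-(1/2) : ℝ) * E3 + (1/2 : ℝ) * E2 + (1/2 + f2 a A B ξ₂) * E1
    rcases hq2 with h | h | h | h <;> rw [h] at hq0 <;> linarith
  · -- ξ₁ positive, ξ₂ negative
    rw [hp1, hp2] at E1 E3
    rw [hq2] at E2 E3
    have hq0 : f2 a A B ξ₁ = 0 := by
      linear_combination (-(1/2) : ℝ) * E3 + (1/2 : ℝ) * E2 + (1/2 + f2 a A B ξ₁) * E1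
    rcases hq1 with h | h | h | h <;> rw [h] at hq0 <;> linarith
  · -- both positive
    rw [hp1, hp2] at E1 E3
    have key : f2 a A B ξ₁ * f2 a A B ξ₂ = -(a ^ 2 + (A ^ 2 + B ^ 2) / 2) := by
      linear_combination E2 + (f2 a A B ξ₁ * f2 a A B ξ₂) * E1
        - ((f2 a A B ξ₁ + f2 a A B ξ₂) / 2) * (E3 - E2 - E1)
    rcases hq1 with h | h | h | h <;> rcases hq2 with h' | h' | h' | h' <;>
      rw [h, h'] at key <;>
      linarith [mul_pos ha ha, mul_pos hA hA, mul_pos hB hB, mul_pos hA hB,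
        sq_nonneg (A - B), hcond, mul_pos (sub_pos.2 hAB) (add_pos hA hB)]
end

section
/- With nodes ξ¹ = -1/2, ξ² = 1/8, ξ³ = 3/8 and weights λ₁ = (2a² - A² + B²)/(2a²), λ₂ = λ₃ = 1/2, for every f in the linear span of f1 and f2, the integral of f² over [-1,1] equals λ₁·f(ξ¹)² + λ₂·f(ξ²)² + λ₃·f(ξ³)². Moreover λ₁ < 0. -/
open MeasureTheory Set

lemma step_piece (g : ℝ → ℝ) (p q k : ℝ) (hpq : p ≤ q)
    (h : ∀ x ∈ Set.Ioo p q, g x = k) :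
    IntervalIntegrable g volume p q ∧ (∫ x in p..q, g x) = (q - p) * k := by
  have hres : volume.restrict (Set.Ioc p q) = volume.restrict (Set.Ioo p q) :=
    (Measure.restrict_congr_set Ioo_ae_eq_Ioc).symm
  have heq : g =ᵐ[volume.restrict (Set.Ioc p q)] fun _ => k := by
    rw [hres]
    exact (ae_restrict_mem measurableSet_Ioo).mono h
  constructor
  · rw [intervalIntegrable_iff_integrableOn_Ioc_of_le hpq]
    exact (integrable_const k).congr heq.symm
  · rw [intervalIntegral.integral_of_le hpq]
    rw [MeasureTheory.integral_congr_ae heq]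
    simp [Real.volume_Ioc, ENNReal.toReal_ofReal (by linarith : (0:ℝ) ≤ q - p), hpq]

theorem three_point_discretization_negative_weight (a A B : ℝ) (ha : 0 < a) (hAB : B < A)
    (hB : 0 < B) (hcond : A ^ 2 > 2 * a ^ 2 + B ^ 2) :
    (∀ f ∈ Submodule.span ℝ ({f1, f2 a A B} : Set (ℝ → ℝ)),
      (∫ x in (-1:ℝ)..1, (f x) ^ 2) =
        (2 * a ^ 2 - A ^ 2 + B ^ 2) / (2 * a ^ 2) * (f (-1/2)) ^ 2
          + 1/2 * (f (1/8)) ^ 2 + 1/2 * (f (3/8)) ^ 2) ∧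
    (2 * a ^ 2 - A ^ 2 + B ^ 2) / (2 * a ^ 2) < 0 := by
  constructor
  · intro f hf
    rw [Submodule.mem_span_pair] at hf
    obtain ⟨c, d, rfl⟩ := hf
    set g : ℝ → ℝ := fun x => ((c • f1 + d • f2 a A B) x) ^ 2 with hg
    have hgx : ∀ x, g x = (c * f1 x + d * f2 a A B x) ^ 2 := by
      intro x; simp [hg]
    have P1 := step_piece g (-1) 0 ((d * a)^2) (by norm_num) (by
      intro x hx
      rw [hgx]
      simp only [f1, f2, if_pos hx.2]
      ring)
    have P2 := step_piece g 0 (1/4) ((c + d * A)^2) (by norm_num) (by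
      intro x hx
      have h0 : ¬ x < 0 := not_lt.2 hx.1.le
      rw [hgx]
      simp only [f1, f2, if_neg h0, if_pos hx.2]
      ring)
    have P3 := step_piece g (1/4) (1/2) ((c - d * A)^2) (by norm_num) (by
      intro x hx
      have h0 : ¬ x < 0 := by push_neg; linarith [hx.1]
      have h14 : ¬ x < 1/4 := not_lt.2 hx.1.le
      rw [hgx]
      simp only [f1, f2, if_neg h0, if_neg h14, if_pos hx.2]
      ring)
    have P4 := step_piece g (1/2) (3/4) ((c + d * B)^2) (by norm_num) (by
      intro x hx
      have h0 : ¬ x < 0 := by push_neg; linarith [hx.1]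
      have h14 : ¬ x < 1/4 := by push_neg; linarith [hx.1]
      have h12 : ¬ x < 1/2 := not_lt.2 hx.1.le
      rw [hgx]
      simp only [f1, f2, if_neg h0, if_neg h14, if_neg h12, if_pos hx.2]
      ring)
    have P5 := step_piece g (3/4) 1 ((c - d * B)^2) (by norm_num) (by
      intro x hx
      have h0 : ¬ x < 0 := by push_neg; linarith [hx.1]
      have h14 : ¬ x < 1/4 := by push_neg; linarith [hx.1]
      have h12 : ¬ x < 1/2 := by push_neg; linarith [hx.1]
      have h34 : ¬ x < 3/4 := not_lt.2 hx.1.le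
      rw [hgx]
      simp only [f1, f2, if_neg h0, if_neg h14, if_neg h12, if_neg h34]
      ring)
    have I45 := P4.1.trans P5.1
    have I345 := P3.1.trans I45
    have I2345 := P2.1.trans I345
    have hsplit : (∫ x in (-1:ℝ)..1, g x)
        = (∫ x in (-1:ℝ)..0, g x) + ((∫ x in (0:ℝ)..(1/4), g x)
          + ((∫ x in (1/4:ℝ)..(1/2), g x) + ((∫ x in (1/2:ℝ)..(3/4), g x)
            + (∫ x in (3/4:ℝ)..1, g x)))) := by
      rw [intervalIntegral.integral_add_adjacent_intervals P4.1 P5.1,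
        intervalIntegral.integral_add_adjacent_intervals P3.1 I45,
        intervalIntegral.integral_add_adjacent_intervals P2.1 I345,
        intervalIntegral.integral_add_adjacent_intervals P1.1 I2345]
    have hLHS : (∫ x in (-1:ℝ)..1, ((c • f1 + d • f2 a A B) x) ^ 2)
        = (d * a)^2 + (1/4) * (c + d * A)^2 + (1/4) * (c - d * A)^2
          + (1/4) * (c + d * B)^2 + (1/4) * (c - d * B)^2 := by
      show (∫ x in (-1:ℝ)..1, g x) = _
      rw [hsplit, P1.2, P2.2, P3.2, P4.2, P5.2]
      ring
    rw [hLHS]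
    have e1 : (c • f1 + d • f2 a A B) (-1/2) = d * a := by
      simp [f1, f2]; norm_num
    have e2 : (c • f1 + d • f2 a A B) (1/8) = c + d * A := by
      simp [f1, f2]; norm_num
    have e3 : (c • f1 + d • f2 a A B) (3/8) = c - d * A := by
      simp [f1, f2]; norm_num; ring
    rw [e1, e2, e3]
    have ha2 : (2 : ℝ) * a ^ 2 ≠ 0 := by positivity
    field_simp
    ring
  · apply div_neg_of_neg_of_pos
    · linarith
    · positivity
end

section
/- With nodes ξ¹ = -1/2, ξ² = 5/8, ξ³ = 7/8 and weights λ₁ = (2a² + A² - B²)/(2a²), λ₂ = λ₃ = 1/2, all three weights are positive and for every f in the linear span of f1 and f2, the integral of f² over [-1,1] equals λ₁·f(ξ¹)² + λ₂·f(ξ²)² + λ₃·f(ξ³)². -/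
open MeasureTheory Set

lemma step_ii (c : ℝ) {u v : ℝ} (huv : u ≤ v) (g : ℝ → ℝ)
    (h : ∀ x ∈ Ioo u v, g x = c) : IntervalIntegrable g volume u v := by
  rw [intervalIntegrable_iff_integrableOn_Ioo_of_le huv]
  exact (integrableOn_const (C := c) measure_Ioo_lt_top.ne).congr_fun
    (fun x hx => (h x hx).symm) measurableSet_Ioo

lemma step_int (c : ℝ) {u v : ℝ} (huv : u ≤ v) (g : ℝ → ℝ)
    (h : ∀ x ∈ Ioo u v, g x = c) : (∫ x in u..v, g x) = (v - u) * c := by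
  rw [intervalIntegral.integral_of_le huv, integral_Ioc_eq_integral_Ioo,
    setIntegral_congr_fun measurableSet_Ioo h]
  simp [Real.volume_Ioo, ENNReal.toReal_ofReal (sub_nonneg.mpr huv), mul_comm, huv]

theorem three_point_discretization_positive_weights (a A B : ℝ) (ha : 0 < a) (hAB : B < A)
    (hB : 0 < B) (hcond : A ^ 2 > 2 * a ^ 2 + B ^ 2) :
    0 < (2 * a ^ 2 + A ^ 2 - B ^ 2) / (2 * a ^ 2) ∧ (0:ℝ) < 1/2 ∧
    (∀ f ∈ Submodule.span ℝ ({f1, f2 a A B} : Set (ℝ → ℝ)),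
      (∫ x in (-1:ℝ)..1, (f x) ^ 2) =
        (2 * a ^ 2 + A ^ 2 - B ^ 2) / (2 * a ^ 2) * (f (-1/2)) ^ 2
          + 1/2 * (f (5/8)) ^ 2 + 1/2 * (f (7/8)) ^ 2) := by
  refine ⟨div_pos (by nlinarith) (by positivity), by norm_num, ?_⟩
  intro f hf
  rw [Submodule.mem_span_pair] at hf
  obtain ⟨c₁, c₂, hc⟩ := hf
  have hfx : ∀ x, f x = c₁ * f1 x + c₂ * f2 a A B x := by
    intro x; rw [← hc]; simp
  -- values on each subinterval
  have h1 : ∀ x ∈ Ioo (-1:ℝ) 0, (f x)^2 = (c₂ * a)^2 := by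
    intro x hx; rw [hfx]; unfold f1 f2
    rw [if_pos hx.2, if_pos hx.2]; ring
  have h2 : ∀ x ∈ Ioo (0:ℝ) (1/4), (f x)^2 = (c₁ + c₂ * A)^2 := by
    intro x hx; rw [hfx]; unfold f1 f2
    rw [if_neg (by linarith [hx.1]), if_neg (by linarith [hx.1]), if_pos hx.2]; ring
  have h3 : ∀ x ∈ Ioo (1/4:ℝ) (1/2), (f x)^2 = (c₁ - c₂ * A)^2 := by
    intro x hx; rw [hfx]; unfold f1 f2
    rw [if_neg (by linarith [hx.1]), if_neg (by linarith [hx.1]),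
      if_neg (by linarith [hx.1]), if_pos hx.2]; ring
  have h4 : ∀ x ∈ Ioo (1/2:ℝ) (3/4), (f x)^2 = (c₁ + c₂ * B)^2 := by
    intro x hx; rw [hfx]; unfold f1 f2
    rw [if_neg (by linarith [hx.1]), if_neg (by linarith [hx.1]),
      if_neg (by linarith [hx.1]), if_neg (by linarith [hx.1]), if_pos hx.2]; ring
  have h5 : ∀ x ∈ Ioo (3/4:ℝ) 1, (f x)^2 = (c₁ - c₂ * B)^2 := by
    intro x hx; rw [hfx]; unfold f1 f2
    rw [if_neg (by linarith [hx.1]), if_neg (by linarith [hx.1]),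
      if_neg (by linarith [hx.1]), if_neg (by linarith [hx.1]),
      if_neg (by linarith [hx.1])]; ring
  have i1 := step_ii _ (by norm_num : (-1:ℝ) ≤ 0) _ h1
  have i2 := step_ii _ (by norm_num : (0:ℝ) ≤ 1/4) _ h2
  have i3 := step_ii _ (by norm_num : (1/4:ℝ) ≤ 1/2) _ h3
  have i4 := step_ii _ (by norm_num : (1/2:ℝ) ≤ 3/4) _ h4
  have i5 := step_ii _ (by norm_num : (3/4:ℝ) ≤ 1) _ h5
  have split1 : (∫ x in (-1:ℝ)..1, (f x)^2) =
      (∫ x in (-1:ℝ)..0, (f x)^2) + (∫ x in (0:ℝ)..(1/4), (f x)^2)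
      + (∫ x in (1/4:ℝ)..(1/2), (f x)^2) + (∫ x in (1/2:ℝ)..(3/4), (f x)^2)
      + (∫ x in (3/4:ℝ)..1, (f x)^2) := by
    rw [← intervalIntegral.integral_add_adjacent_intervals (i1.trans i2 |>.trans i3 |>.trans i4) i5,
      ← intervalIntegral.integral_add_adjacent_intervals (i1.trans i2 |>.trans i3) i4,
      ← intervalIntegral.integral_add_adjacent_intervals (i1.trans i2) i3,
      ← intervalIntegral.integral_add_adjacent_intervals i1 i2]
  rw [split1, step_int _ (by norm_num) _ h1, step_int _ (by norm_num) _ h2,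
    step_int _ (by norm_num) _ h3, step_int _ (by norm_num) _ h4,
    step_int _ (by norm_num) _ h5]
  -- evaluate f at the nodes
  have e1 : f (-1/2) = c₂ * a := by
    rw [hfx]; unfold f1 f2; rw [if_pos (by norm_num), if_pos (by norm_num)]; ring
  have e2 : f (5/8) = c₁ + c₂ * B := by
    rw [hfx]; unfold f1 f2
    rw [if_neg (by norm_num), if_neg (by norm_num), if_neg (by norm_num),
      if_neg (by norm_num), if_pos (by norm_num)]; ring
  have e3 : f (7/8) = c₁ - c₂ * B := by
    rw [hfx]; unfold f1 f2
    rw [if_neg (by norm_num), if_neg (by norm_num), if_neg (by norm_num),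
      if_neg (by norm_num), if_neg (by norm_num)]; ring
  rw [e1, e2, e3]
  have ha' : a ≠ 0 := ne_of_gt ha
  field_simp
  ring
end

section
/- Suppose nodes ξ¹, ξ² ∈ [-1,1] and weights λ₁, λ₂ ∈ ℝ satisfy: λ₁·f1(ξ¹)² + λ₂·f1(ξ²)² = 1, λ₁·f2(ξ¹)² + λ₂·f2(ξ²)² = a² + A²/2 + B²/2, and λ₁·f1(ξ¹)f2(ξ¹) + λ₂·f1(ξ²)f2(ξ²) = 0, with f1(ξ¹) = f1(ξ²) = 1 and f2(ξ¹) = -f2(ξ²). Then λ₁ = λ₂ = 1/2 and f2(ξ¹)² = a² + A²/2 + B²/2, which contradicts A² > 2a² + B² since f2 takes only the values ±A, ±B on [0,1]. -/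
open MeasureTheory Set

lemma f2_sq (a A B ξ : ℝ) (h : ¬ ξ < 0) :
    (f2 a A B ξ) ^ 2 = A ^ 2 ∨ (f2 a A B ξ) ^ 2 = B ^ 2 := by
  unfold f2
  simp only [if_neg h]
  split_ifs <;> simp [neg_pow]

theorem two_point_opposite_values_contradiction (a A B : ℝ) (ha : 0 < a) (hAB : B < A)
    (hB : 0 < B) (hcond : A ^ 2 > 2 * a ^ 2 + B ^ 2)
    (ξ₁ ξ₂ : ℝ) (hξ₁ : ξ₁ ∈ Icc (-1:ℝ) 1) (hξ₂ : ξ₂ ∈ Icc (-1:ℝ) 1)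
    (l₁ l₂ : ℝ)
    (h1 : l₁ * (f1 ξ₁) ^ 2 + l₂ * (f1 ξ₂) ^ 2 = 1)
    (h2 : l₁ * (f2 a A B ξ₁) ^ 2 + l₂ * (f2 a A B ξ₂) ^ 2 = a ^ 2 + A ^ 2 / 2 + B ^ 2 / 2)
    (h3 : l₁ * f1 ξ₁ * f2 a A B ξ₁ + l₂ * f1 ξ₂ * f2 a A B ξ₂ = 0)
    (hv1 : f1 ξ₁ = 1) (hv2 : f1 ξ₂ = 1) (hopp : f2 a A B ξ₁ = -(f2 a A B ξ₂)) :
    l₁ = 1/2 ∧ l₂ = 1/2 ∧ (f2 a A B ξ₁) ^ 2 = a ^ 2 + A ^ 2 / 2 + B ^ 2 / 2 ∧ False := by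
  have hξ1pos : ¬ ξ₁ < 0 := by
    intro h; unfold f1 at hv1; rw [if_pos h] at hv1; norm_num at hv1
  have hc : f2 a A B ξ₁ ≠ 0 := by
    rcases f2_sq a A B ξ₁ hξ1pos with h | h <;> intro h0 <;> rw [h0] at h <;> nlinarith
  rw [hv1, hv2] at h1 h3
  have hsum : l₁ + l₂ = 1 := by linarith [h1]
  rw [hopp] at h3
  have hl : l₁ = l₂ := by
    have := h3
    have h2' : (l₁ - l₂) * f2 a A B ξ₂ = 0 := by ring_nf; ring_nf at this; linarith
    have : f2 a A B ξ₂ ≠ 0 := by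
      intro h0; apply hc; rw [hopp, h0]; ring
    rcases mul_eq_zero.mp h2' with h | h
    · linarith
    · exact absurd h this
  have hl1 : l₁ = 1/2 := by linarith
  have hl2 : l₂ = 1/2 := by linarith
  have hsq : (f2 a A B ξ₂) ^ 2 = (f2 a A B ξ₁) ^ 2 := by rw [hopp]; ring
  rw [hl1, hl2, hsq] at h2
  have hkey : (f2 a A B ξ₁) ^ 2 = a ^ 2 + A ^ 2 / 2 + B ^ 2 / 2 := by linarith
  refine ⟨hl1, hl2, hkey, ?_⟩
  rcases f2_sq a A B ξ₁ hξ1pos with h | h <;> rw [h] at hkey <;> nlinarith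
end
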